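/- The number of permutations of {1,…,n} (n ≥ 3) that avoid the pattern 213 and contain the pattern 231 exactly once equals 2^(n-3). -/
import Mathlib


/-- An occurrence of the pattern `τ` in `α` at the strictly increasing
index sequence `f`: the subsequence `α ∘ f` is order-isomorphic to `τ`. -/
def PattOccursAt {k n : ℕ} (τ : Equiv.Perm (Fin k)) (α : Equiv.Perm (Fin n))
    (f : Fin k → Fin n) : Prop :=
  StrictMono f ∧ ∀ i j : Fin k, τ i < τ j ↔ α (f i) < α (f j)

/-- `α` contains the pattern `τ`. -/
def Contains {k n : ℕ} (τ : Equiv.Perm (Fin k)) (α : Equiv.Perm (Fin n)) : Prop :=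
  ∃ f, PattOccursAt τ α f

/-- `α` avoids the pattern `τ`. -/
def Avoids {k n : ℕ} (τ : Equiv.Perm (Fin k)) (α : Equiv.Perm (Fin n)) : Prop :=
  ¬ Contains τ α

/-- `α` contains the pattern `τ` exactly once. -/
def ContainsExactlyOnce {k n : ℕ} (τ : Equiv.Perm (Fin k)) (α : Equiv.Perm (Fin n)) : Prop :=
  ∃! f, PattOccursAt τ α f

/-- `T_k^m`: the permutations `σ` of length `k` with first entry `σ(1) = m`
(one-based; in `Fin k` terms, `(σ 0) + 1 = m`). -/
def Tkm (k m : ℕ) : Set (Equiv.Perm (Fin k)) :=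
  {σ | ∀ i : Fin k, (i : ℕ) = 0 → (σ i : ℕ) + 1 = m}

namespace Stmt12
open Finset

/-- value of the constructed permutation at position `p` (length `K+3`). -/
def fval (T : Finset ℕ) (K p : ℕ) : ℕ :=
  if p ∈ T then K + 2 - (T ∩ Finset.range p).card
  else if p < K then (Finset.range p \ T).card
  else if p = K then K + 1 - T.card
  else if p = K + 1 then K + 2 - T.card
  else K - T.card

variable {T : Finset ℕ} {K p q : ℕ}

lemma card_le_K (hT : T ⊆ Finset.range K) : T.card ≤ K := by
  simpa using Finset.card_le_card hT

lemma cnt_le : (T ∩ Finset.range p).card ≤ T.card :=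
  Finset.card_le_card Finset.inter_subset_left

lemma cnt_lt (hp : p ∈ T) : (T ∩ Finset.range p).card < T.card := by
  apply Finset.card_lt_card
  refine (Finset.ssubset_iff_of_subset Finset.inter_subset_left).mpr ⟨p, hp, ?_⟩
  simp

lemma cnt_mono (hpq : p ≤ q) : (T ∩ Finset.range p).card ≤ (T ∩ Finset.range q).card :=
  Finset.card_le_card (Finset.inter_subset_inter le_rfl (Finset.range_subset_range.mpr hpq))

lemma cnt_strict (hp : p ∈ T) (hpq : p < q) :
    (T ∩ Finset.range p).card < (T ∩ Finset.range q).card := by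
  apply Finset.card_lt_card
  refine (Finset.ssubset_iff_of_subset
    (Finset.inter_subset_inter le_rfl (Finset.range_subset_range.mpr hpq.le))).mpr ⟨p, ?_, ?_⟩
  · simp [hp, hpq]
  · simp

lemma fval_mem (hp : p ∈ T) : fval T K p = K + 2 - (T ∩ Finset.range p).card := by
  simp [fval, hp]

lemma fval_small (hp : p ∉ T) (hpK : p < K) : fval T K p = (Finset.range p \ T).card := by
  simp [fval, hp, hpK]

lemma notmem_of_ge (hT : T ⊆ Finset.range K) (h : K ≤ p) : p ∉ T := by
  intro hp; have := hT hp; simp at this; omega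

lemma fval_K (hT : T ⊆ Finset.range K) : fval T K K = K + 1 - T.card := by
  rw [fval, if_neg (notmem_of_ge hT le_rfl), if_neg (lt_irrefl K), if_pos rfl]

lemma fval_K1 (hT : T ⊆ Finset.range K) : fval T K (K+1) = K + 2 - T.card := by
  rw [fval, if_neg (notmem_of_ge hT (by omega)), if_neg (by omega), if_neg (by omega), if_pos rfl]

lemma fval_K2 (hT : T ⊆ Finset.range K) : fval T K (K+2) = K - T.card := by
  rw [fval, if_neg (notmem_of_ge hT (by omega)), if_neg (by omega), if_neg (by omega),
    if_neg (by omega)]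

/-- large values lower bound -/
lemma fval_mem_lb (hT : T ⊆ Finset.range K) (hp : p ∈ T) : K + 3 ≤ fval T K p + T.card := by
  have h1 := cnt_lt (T := T) (p := p) hp
  have h2 := card_le_K hT
  rw [fval_mem hp]; omega

lemma fval_mem_ub (hp : p ∈ T) : fval T K p ≤ K + 2 := by
  rw [fval_mem hp]; omega

/-- small values upper bound -/
lemma fval_small_ub (hT : T ⊆ Finset.range K) (hp : p ∉ T) (hpK : p < K) :
    fval T K p + T.card + 1 ≤ K := by
  rw [fval_small hp hpK]
  have hsub : Finset.range p \ T ⊆ (Finset.range K \ T).erase p := by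
    intro x hx
    simp only [Finset.mem_sdiff, Finset.mem_range] at hx
    simp only [Finset.mem_erase, Finset.mem_sdiff, Finset.mem_range]
    exact ⟨by omega, by omega, hx.2⟩
  have h1 := Finset.card_le_card hsub
  have h2 : p ∈ Finset.range K \ T := by simp [hpK, hp]
  have h3 := Finset.card_erase_of_mem h2
  have h4 : (Finset.range K \ T).card = K - T.card := by
    rw [Finset.card_sdiff_of_subset hT, Finset.card_range]
  have h5 := card_le_K hT
  have h6 : 0 < (Finset.range K \ T).card := Finset.card_pos.mpr ⟨p, h2⟩
  omega

lemma fval_anti (hT : T ⊆ Finset.range K) (hp : p ∈ T) (hq : q ∈ T) (hpq : p < q) :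
    fval T K q < fval T K p := by
  have h1 := cnt_strict hp hpq
  have h2 := cnt_lt (T := T) (p := p) hp
  have h3 := cnt_le (T := T) (p := q)
  have h4 := card_le_K hT
  rw [fval_mem hp, fval_mem hq]; omega

lemma fval_mono (hp : p ∉ T) (hq : q ∉ T) (hpq : p < q) (hqK : q < K) :
    fval T K p < fval T K q := by
  rw [fval_small hp (hpq.trans hqK), fval_small hq hqK]
  apply Finset.card_lt_card
  refine (Finset.ssubset_iff_of_subset ?_).mpr ⟨p, ?_, ?_⟩
  · exact Finset.sdiff_subset_sdiff (Finset.range_subset_range.mpr hpq.le) le_rfl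
  · simp [hpq, hp]
  · simp

lemma fval_lt (hT : T ⊆ Finset.range K) (hp : p < K + 3) : fval T K p < K + 3 := by
  have hs := card_le_K hT
  by_cases h1 : p ∈ T
  · have := fval_mem_ub (K := K) h1; omega
  · by_cases h2 : p < K
    · have := fval_small_ub hT h1 h2; omega
    · rcases (by omega : p = K ∨ p = K + 1 ∨ p = K + 2) with h | h | h <;> subst h
      · rw [fval_K hT]; omega
      · rw [fval_K1 hT]; omega
      · rw [fval_K2 hT]; omega

/-- classification of positions -/
lemma pos_cases (hT : T ⊆ Finset.range K) (hp : p < K + 3) :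
    p ∈ T ∨ (p ∉ T ∧ p < K) ∨ p = K ∨ p = K + 1 ∨ p = K + 2 := by
  by_cases h1 : p ∈ T
  · exact Or.inl h1
  · by_cases h2 : p < K
    · exact Or.inr (Or.inl ⟨h1, h2⟩)
    · omega

lemma fval_inj (hT : T ⊆ Finset.range K) (hp : p < K + 3) (hq : q < K + 3) (hpq : p < q) :
    fval T K p ≠ fval T K q := by
  have hs := card_le_K hT
  rcases pos_cases hT hp with h1 | ⟨h1, h1'⟩ | h1 | h1 | h1 <;>
    rcases pos_cases hT hq with h2 | ⟨h2, h2'⟩ | h2 | h2 | h2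
  · exact (fval_anti hT h1 h2 hpq).ne'
  · have a := fval_mem_lb hT h1; have b := fval_small_ub hT h2 h2'; omega
  · subst h2; have a := fval_mem_lb hT h1; rw [fval_K hT]; omega
  · subst h2; have a := fval_mem_lb hT h1; rw [fval_K1 hT]; omega
  · subst h2; have a := fval_mem_lb hT h1; rw [fval_K2 hT]; omega
  · have a := fval_small_ub hT h1 h1'; have b := fval_mem_lb hT h2; omega
  · exact (fval_mono h1 h2 hpq h2').ne
  · subst h2; have a := fval_small_ub hT h1 h1'; rw [fval_K hT]; omega
  · subst h2; have a := fval_small_ub hT h1 h1'; rw [fval_K1 hT]; omega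
  · subst h2; have a := fval_small_ub hT h1 h1'; rw [fval_K2 hT]; omega
  · subst h1; have := hT h2; simp at this; omega
  · subst h1; omega
  · omega
  · subst h1 h2; rw [fval_K hT, fval_K1 hT]; omega
  · subst h1 h2; rw [fval_K hT, fval_K2 hT]; omega
  · subst h1; have := hT h2; simp at this; omega
  · subst h1; omega
  · omega
  · omega
  · subst h1 h2; rw [fval_K1 hT, fval_K2 hT]; omega
  · subst h1; have := hT h2; simp at this; omega
  · omega
  · omega
  · omega
  · omega


lemma fval_tail (hT : T ⊆ Finset.range K) (h : K ≤ p) (hp : p < K + 3) :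
    K ≤ fval T K p + T.card ∧ fval T K p + T.card ≤ K + 2 := by
  have hs := card_le_K hT
  rcases (by omega : p = K ∨ p = K + 1 ∨ p = K + 2) with h | h | h <;> subst h
  · rw [fval_K hT]; omega
  · rw [fval_K1 hT]; omega
  · rw [fval_K2 hT]; omega

/-- no 213 pattern in fval -/
lemma no213 (hT : T ⊆ Finset.range K) {a b c : ℕ} (hc : c < K + 3)
    (hab : a < b) (hbc : b < c)
    (h1 : fval T K b < fval T K a) (h2 : fval T K a < fval T K c) : False := by
  have hs := card_le_K hT
  have ha : a < K + 3 := by omega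
  have hb : b < K + 3 := by omega
  rcases pos_cases hT ha with h3 | ⟨h3, h3'⟩ | h3 | h3 | h3
  · -- a large : fval c > fval a impossible
    have la := fval_mem_lb hT h3
    rcases pos_cases hT hc with h4 | ⟨h4, h4'⟩ | h4 | h4 | h4
    · exact absurd (fval_anti hT h3 h4 (by omega)) (by omega)
    · have := fval_small_ub hT h4 h4'; omega
    · subst h4; rw [fval_K hT] at h2; omega
    · subst h4; rw [fval_K1 hT] at h2; omega
    · subst h4; rw [fval_K2 hT] at h2; omega
  · -- a small : fval b < fval a impossible
    have ua := fval_small_ub hT h3 h3'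
    rcases pos_cases hT hb with h4 | ⟨h4, h4'⟩ | h4 | h4 | h4
    · have := fval_mem_lb hT h4; omega
    · exact absurd (fval_mono h3 h4 hab h4') (by omega)
    · subst h4; rw [fval_K hT] at h1; omega
    · subst h4; rw [fval_K1 hT] at h1; omega
    · subst h4; rw [fval_K2 hT] at h1; omega
  · -- a = K
    rcases (by omega : b = K + 1 ∨ b = K + 2) with h4 | h4 <;> subst h4
    · rw [h3, fval_K hT, fval_K1 hT] at h1; omega
    · omega
  · subst h3; omega
  · omega

/-- the only 231 pattern in fval is at (K, K+1, K+2) -/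
lemma unique231 (hT : T ⊆ Finset.range K) {a b c : ℕ} (hc : c < K + 3)
    (hab : a < b) (hbc : b < c)
    (h1 : fval T K c < fval T K a) (h2 : fval T K a < fval T K b) :
    a = K ∧ b = K + 1 ∧ c = K + 2 := by
  have hs := card_le_K hT
  have ha : a < K + 3 := by omega
  have hb : b < K + 3 := by omega
  rcases pos_cases hT ha with h3 | ⟨h3, h3'⟩ | h3 | h3 | h3
  · -- a large : fval b > fval a impossible
    exfalso
    have la := fval_mem_lb hT h3
    rcases pos_cases hT hb with h4 | ⟨h4, h4'⟩ | h4 | h4 | h4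
    · exact absurd (fval_anti hT h3 h4 hab) (by omega)
    · have := fval_small_ub hT h4 h4'; omega
    · subst h4; rw [fval_K hT] at h2; omega
    · subst h4; rw [fval_K1 hT] at h2; omega
    · subst h4; rw [fval_K2 hT] at h2; omega
  · -- a small : fval c < fval a impossible
    exfalso
    have ua := fval_small_ub hT h3 h3'
    rcases pos_cases hT hc with h4 | ⟨h4, h4'⟩ | h4 | h4 | h4
    · have := fval_mem_lb hT h4; omega
    · exact absurd (fval_mono h3 h4 (by omega) h4') (by omega)
    · subst h4; rw [fval_K hT] at h1; omega
    · subst h4; rw [fval_K1 hT] at h1; omega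
    · subst h4; rw [fval_K2 hT] at h1; omega
  · -- a = K : forced
    rcases (by omega : b = K + 1 ∨ b = K + 2) with h4 | h4 <;> subst h4
    · exact ⟨h3, rfl, by omega⟩
    · exfalso; rw [h3, fval_K hT, fval_K2 hT] at h2; omega
  · subst h3; exfalso
    have h4 : b = K + 2 := by omega
    subst h4; rw [fval_K1 hT, fval_K2 hT] at h2; omega
  · omega

lemma exists231 (hT : T ⊆ Finset.range K) :
    fval T K (K+2) < fval T K K ∧ fval T K K < fval T K (K+1) := by
  have hs := card_le_K hT
  rw [fval_K hT, fval_K1 hT, fval_K2 hT]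
  omega


noncomputable def Phi (K : ℕ) (T : Finset ℕ) : Equiv.Perm (Fin (K+3)) :=
  if hT : T ⊆ Finset.range K then
    Equiv.ofBijective (fun p => ⟨fval T K p.val, fval_lt hT p.isLt⟩)
      (Finite.injective_iff_bijective.mp (fun p q h => by
        by_contra hne
        rcases lt_trichotomy p.val q.val with hlt | he | hlt
        · exact fval_inj hT p.isLt q.isLt hlt (congrArg Fin.val h)
        · exact hne (Fin.ext he)
        · exact fval_inj hT q.isLt p.isLt hlt (congrArg Fin.val h).symm))
  else 1

lemma Phi_apply (hT : T ⊆ Finset.range K) (x : Fin (K+3)) :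
    ((Phi K T x : Fin (K+3)) : ℕ) = fval T K x.val := by
  rw [Phi, dif_pos hT]; rfl

lemma Phi_injOn {T T' : Finset ℕ} {K : ℕ} (hT : T ⊆ Finset.range K) (hT' : T' ⊆ Finset.range K)
    (h : Phi K T = Phi K T') : T = T' := by
  have hv : ∀ x : Fin (K+3), fval T K x.val = fval T' K x.val := fun x => by
    rw [← Phi_apply hT, ← Phi_apply hT', h]
  have hcard : T.card = T'.card := by
    have h1 := hv ⟨K+1, by omega⟩
    have e1 : fval T K (K+1) = K + 2 - T.card := fval_K1 hT
    have e2 : fval T' K (K+1) = K + 2 - T'.card := fval_K1 hT'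
    have h2 := card_le_K hT
    have h3 := card_le_K hT'
    simp only [] at h1
    omega
  have key : ∀ (S : Finset ℕ), S ⊆ Finset.range K → ∀ x, x < K →
      (x ∈ S ↔ K + 3 ≤ fval S K x + S.card) := by
    intro S hS x hxK
    constructor
    · intro hx; exact fval_mem_lb hS hx
    · intro hge
      by_contra hx
      have := fval_small_ub hS hx hxK; omega
  ext x
  by_cases hxK : x < K
  · rw [key T hT x hxK, key T' hT' x hxK, hcard]
    have h1 := hv ⟨x, by omega⟩
    simp only [] at h1
    omega
  · constructor
    · intro hx; have := hT hx; simp at this; omega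
    · intro hx; have := hT' hx; simp at this; omega

lemma Phi_mem (hT : T ⊆ Finset.range K) :
    (¬ ∃ i j l : Fin (K+3), i < j ∧ j < l ∧ Phi K T j < Phi K T i ∧ Phi K T i < Phi K T l) ∧
    (∃! t : Fin (K+3) × Fin (K+3) × Fin (K+3),
      t.1 < t.2.1 ∧ t.2.1 < t.2.2 ∧ Phi K T t.2.2 < Phi K T t.1 ∧
        Phi K T t.1 < Phi K T t.2.1) := by
  constructor
  · rintro ⟨a, b, c, hab, hbc, h1, h2⟩
    rw [Fin.lt_def] at hab hbc h1 h2
    rw [Phi_apply hT, Phi_apply hT] at h1 h2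
    exact no213 hT c.isLt hab hbc h1 h2
  · refine ⟨(⟨K, by omega⟩, ⟨K+1, by omega⟩, ⟨K+2, by omega⟩), ⟨?_, ?_, ?_, ?_⟩, ?_⟩
    · exact Fin.mk_lt_mk.mpr (by omega)
    · exact Fin.mk_lt_mk.mpr (by omega)
    · rw [Fin.lt_def, Phi_apply hT, Phi_apply hT]; exact (exists231 hT).1
    · rw [Fin.lt_def, Phi_apply hT, Phi_apply hT]; exact (exists231 hT).2
    · rintro ⟨a, b, c⟩ ⟨hab, hbc, h1, h2⟩
      rw [Fin.lt_def] at hab hbc h1 h2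
      rw [Phi_apply hT, Phi_apply hT] at h1 h2
      obtain ⟨e1, e2, e3⟩ := unique231 hT c.isLt hab hbc h1 h2
      simp only [Prod.mk.injEq]
      exact ⟨Fin.ext e1, Fin.ext e2, Fin.ext e3⟩


open Finset in
lemma perm_filter_lt {m : ℕ} (α : Equiv.Perm (Fin m)) (c : Fin m) :
    (univ.filter fun q => α q < c).card = c.val := by
  rw [← Fin.card_Iio c]
  apply Finset.card_bij (fun q _ => α q)
  · intro a ha; simp at ha ⊢; exact ha
  · intro a _ b _ h; exact α.injective h
  · intro b hb; exact ⟨α.symm b, by simpa using hb, by simp⟩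

open Finset in
lemma perm_filter_gt {m : ℕ} (α : Equiv.Perm (Fin m)) (c : Fin m) :
    (univ.filter fun q => c < α q).card = m - 1 - c.val := by
  rw [← Fin.card_Ioi c]
  apply Finset.card_bij (fun q _ => α q)
  · intro a ha; simp at ha ⊢; exact ha
  · intro a _ b _ h; exact α.injective h
  · intro b hb; exact ⟨α.symm b, by simpa using hb, by simp⟩

open Finset in
lemma converse {K : ℕ} {α : Equiv.Perm (Fin (K+3))}
    (hA : ¬ ∃ i j l : Fin (K+3), i < j ∧ j < l ∧ α j < α i ∧ α i < α l)
    (hU : ∃! t : Fin (K+3) × Fin (K+3) × Fin (K+3),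
      t.1 < t.2.1 ∧ t.2.1 < t.2.2 ∧ α t.2.2 < α t.1 ∧ α t.1 < α t.2.1) :
    ∃ T : Finset ℕ, T ⊆ Finset.range K ∧ Phi K T = α := by
  obtain ⟨⟨i, j, k⟩, hcond, hu⟩ := hU
  obtain ⟨h1, h2, h3, h4⟩ : i < j ∧ j < k ∧ α k < α i ∧ α i < α j := hcond
  have hu' : ∀ p q r : Fin (K+3), p < q → q < r → α r < α p → α p < α q →
      p = i ∧ q = j ∧ r = k := by
    intro p q r c1 c2 c3 c4
    have heq := hu (p, q, r) ⟨c1, c2, c3, c4⟩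
    exact ⟨congrArg (fun t => t.1) heq, congrArg (fun t => t.2.1) heq,
      congrArg (fun t => t.2.2) heq⟩
  clear hu
  have hinj : ∀ p q : Fin (K+3), (α p : ℕ) = (α q : ℕ) → p = q := by
    intro p q h
    exact α.injective (Fin.val_injective h)
  -- Step A1 : α i = α k + 1
  have hki1 : (α i : ℕ) = (α k : ℕ) + 1 := by
    by_contra hne
    have hlt : (α k : ℕ) + 1 < (α i : ℕ) := by
      have := Fin.lt_def.mp h3; omega
    set v : Fin (K+3) := ⟨(α k : ℕ) + 1, by have := (α i).isLt; omega⟩ with hv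
    set p := α.symm v with hp
    have hαp : (α p : ℕ) = (α k : ℕ) + 1 := by rw [hp, α.apply_symm_apply]
    have hvk : α k < α p := Fin.lt_def.mpr (by omega)
    have hvi : (α p : ℕ) < (α i : ℕ) := by omega
    have hvj : α p < α j := Fin.lt_def.mpr (by have := Fin.lt_def.mp h4; omega)
    rcases lt_trichotomy p j with hpj | hpj | hpj
    · have hpi : p = i := (hu' p j k hpj h2 hvk hvj).1
      rw [hpi] at hvi; omega
    · rw [hpj] at hvj; exact absurd hvj (lt_irrefl _)
    · have hpk : p = k := (hu' i j p h1 hpj (Fin.lt_def.mpr hvi) h4).2.2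
      rw [hpk] at hαp; omega
  -- Step A2 : α j = α i + 1
  have hji1 : (α j : ℕ) = (α i : ℕ) + 1 := by
    by_contra hne
    have hlt : (α i : ℕ) + 1 < (α j : ℕ) := by
      have := Fin.lt_def.mp h4; omega
    set v : Fin (K+3) := ⟨(α i : ℕ) + 1, by have := (α j).isLt; omega⟩ with hv
    set p := α.symm v with hp
    have hαp : (α p : ℕ) = (α i : ℕ) + 1 := by rw [hp, α.apply_symm_apply]
    have hvi : α i < α p := Fin.lt_def.mpr (by omega)
    have hvj : α p < α j := Fin.lt_def.mpr (by omega)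
    have hvk : α k < α p := Fin.lt_def.mpr (by omega)
    rcases lt_trichotomy p j with hpj | hpj | hpj
    · have hpi : p = i := (hu' p j k hpj h2 hvk hvj).1
      rw [hpi] at hαp; omega
    · rw [hpj] at hvj; exact absurd hvj (lt_irrefl _)
    · rcases lt_trichotomy p k with hpk | hpk | hpk
      · have : p = j := (hu' i p k (h1.trans hpj) hpk h3 hvi).2.1
        rw [this] at hpj; exact absurd hpj (lt_irrefl _)
      · rw [hpk] at hαp; have := Fin.lt_def.mp h3; omega
      · exact hA ⟨i, k, p, h1.trans h2, hpk, h3, hvi⟩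
  -- Step B : k is the last position
  have hnok : ∀ p : Fin (K+3), ¬ k < p := by
    intro p hp
    rcases lt_trichotomy (α p) (α i) with hpi | hpi | hpi
    · have hpk : p = k := (hu' i j p h1 (h2.trans hp) hpi h4).2.2
      rw [hpk] at hp; exact absurd hp (lt_irrefl _)
    · have hpi' : p = i := α.injective hpi
      rw [hpi'] at hp
      exact absurd ((h1.trans h2).trans hp) (lt_irrefl _)
    · exact hA ⟨i, k, p, h1.trans h2, hp, h3, hpi⟩
  have hk2 : (k : ℕ) = K + 2 := by
    have h5 := hnok ⟨K+2, by omega⟩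
    rw [Fin.lt_def] at h5
    have := k.isLt; simp at h5; omega
  -- Step C2 : nothing strictly between j and k
  have hnoj : ∀ p : Fin (K+3), j < p → p < k → False := by
    intro p hjp hpk
    rcases lt_trichotomy (α p) (α i) with hpi | hpi | hpi
    · have : p = k := (hu' i j p h1 hjp hpi h4).2.2
      rw [this] at hpk; exact absurd hpk (lt_irrefl _)
    · have hpi' : p = i := α.injective hpi
      rw [hpi'] at hjp
      exact absurd (h1.trans hjp) (lt_irrefl _)
    · have hjp2 : α j < α p := by
        rw [Fin.lt_def] at hpi ⊢
        have hne : (α p : ℕ) ≠ (α j : ℕ) := by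
          intro h
          have : p = j := hinj p j h
          rw [this] at hjp; exact absurd hjp (lt_irrefl _)
        omega
      have : j = i := (hu' j p k hjp hpk (h3.trans h4) hjp2).1
      rw [this] at h1; exact absurd h1 (lt_irrefl _)
  have hj1 : (j : ℕ) = K + 1 := by
    have hjk := Fin.lt_def.mp h2
    by_contra hne
    exact hnoj ⟨(j : ℕ) + 1, by omega⟩ (Fin.lt_def.mpr (by simp))
      (Fin.lt_def.mpr (by simp; omega))
  -- Step C3 : nothing strictly between i and j
  have hnoi : ∀ p : Fin (K+3), i < p → p < j → False := by
    intro p hip hpj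
    rcases lt_trichotomy (α p) (α i) with hpi | hpi | hpi
    · exact hA ⟨i, p, j, hip, hpj, hpi, h4⟩
    · have hpi' : p = i := α.injective hpi
      rw [hpi'] at hip; exact absurd hip (lt_irrefl _)
    · have : p = j := (hu' i p k hip (hpj.trans h2) h3 hpi).2.1
      rw [this] at hpj; exact absurd hpj (lt_irrefl _)
  have hi0 : (i : ℕ) = K := by
    have hij := Fin.lt_def.mp h1
    by_contra hne
    exact hnoi ⟨(i : ℕ) + 1, by omega⟩ (Fin.lt_def.mpr (by simp))
      (Fin.lt_def.mpr (by simp; omega))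
  -- values
  set w : ℕ := (α k : ℕ) with hw
  have hwK : w + 2 < K + 3 := by have := (α j).isLt; omega
  -- tail membership characterisation
  have htail : ∀ q : Fin (K+3), ¬ (q : ℕ) < K → q = i ∨ q = j ∨ q = k := by
    intro q hq
    have := q.isLt
    rcases (by omega : (q : ℕ) = K ∨ (q : ℕ) = K + 1 ∨ (q : ℕ) = K + 2) with h | h | h
    · exact Or.inl (Fin.ext (by rw [h, hi0]))
    · exact Or.inr (Or.inl (Fin.ext (by rw [h, hj1])))
    · exact Or.inr (Or.inr (Fin.ext (by rw [h, hk2])))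
  have hvaltail : ∀ q : Fin (K+3), (q : ℕ) < K →
      ((α q : ℕ) < w ∨ w + 2 < (α q : ℕ)) := by
    intro q hq
    have hqi : q ≠ i := fun h => by rw [h, hi0] at hq; omega
    have hqj : q ≠ j := fun h => by rw [h, hj1] at hq; omega
    have hqk : q ≠ k := fun h => by rw [h, hk2] at hq; omega
    have n1 : (α q : ℕ) ≠ (α i : ℕ) := fun h => hqi (hinj q i h)
    have n2 : (α q : ℕ) ≠ (α j : ℕ) := fun h => hqj (hinj q j h)
    have n3 : (α q : ℕ) ≠ (α k : ℕ) := fun h => hqk (hinj q k h)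
    omega
  -- monotonicity of smalls and larges
  have M1 : ∀ p q : Fin (K+3), p < q → (q : ℕ) < K →
      (α p : ℕ) < w → (α q : ℕ) < w → (α p : ℕ) < (α q : ℕ) := by
    intro p q hpq hqK hp hq
    by_contra hge
    have hne : (α q : ℕ) ≠ (α p : ℕ) := by
      intro h
      have : q = p := hinj q p h
      rw [this] at hpq; exact absurd hpq (lt_irrefl _)
    have hlt : α q < α p := Fin.lt_def.mpr (by omega)
    exact hA ⟨p, q, j, hpq, Fin.lt_def.mpr (by omega), hlt, Fin.lt_def.mpr (by omega)⟩
  have M2 : ∀ p q : Fin (K+3), p < q → (q : ℕ) < K →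
      w + 2 < (α p : ℕ) → w + 2 < (α q : ℕ) → (α q : ℕ) < (α p : ℕ) := by
    intro p q hpq hqK hp hq
    by_contra hge
    have hne : (α p : ℕ) ≠ (α q : ℕ) := by
      intro h
      have : p = q := hinj p q h
      rw [this] at hpq; exact absurd hpq (lt_irrefl _)
    have hpK : (p : ℕ) < K := by have := Fin.lt_def.mp hpq; omega
    have hpi : p = i := (hu' p q k hpq (Fin.lt_def.mpr (by omega))
      (Fin.lt_def.mpr (by omega)) (Fin.lt_def.mpr (by omega))).1
    rw [hpi] at hpK; omega
  -- definition of T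
  set T : Finset ℕ := (univ.filter fun q => α j < α q).image Fin.val with hTdef
  have hmemT : ∀ x : ℕ, x ∈ T ↔ ∃ q : Fin (K+3), (q : ℕ) = x ∧ w + 2 < (α q : ℕ) := by
    intro x
    rw [hTdef]
    simp only [Finset.mem_image, Finset.mem_filter, Finset.mem_univ, true_and]
    constructor
    · rintro ⟨q, hq, rfl⟩
      exact ⟨q, rfl, by have := Fin.lt_def.mp hq; omega⟩
    · rintro ⟨q, rfl, hq⟩
      exact ⟨q, Fin.lt_def.mpr (by omega), rfl⟩
  have hT : T ⊆ Finset.range K := by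
    intro x hx
    rw [hmemT] at hx
    obtain ⟨q, rfl, hq⟩ := hx
    rw [Finset.mem_range]
    by_contra hge
    rcases htail q (by omega) with h | h | h <;> rw [h] at hq <;> omega
  -- cardinality of T
  have hcardT : T.card = K - w := by
    rw [hTdef, Finset.card_image_of_injective _ Fin.val_injective]
    have h5 := perm_filter_gt α (α j)
    rw [h5]
    omega
  refine ⟨T, hT, ?_⟩
  -- pointwise equality
  have main : ∀ x : Fin (K+3), fval T K (x : ℕ) = (α x : ℕ) := by
    intro x
    by_cases hxK : (x : ℕ) < K
    · rcases hvaltail x hxK with hsm | hlg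
      · -- small case
        have hxT : (x : ℕ) ∉ T := by
          rw [hmemT]
          rintro ⟨q, hq, hq2⟩
          have : q = x := Fin.ext hq
          rw [this] at hq2; omega
        rw [fval_small hxT hxK]
        have hset : Finset.range (x : ℕ) \ T =
            (univ.filter fun q => α q < α x).image Fin.val := by
          ext y
          simp only [Finset.mem_sdiff, Finset.mem_range, Finset.mem_image, Finset.mem_filter,
            Finset.mem_univ, true_and]
          constructor
          · rintro ⟨hy1, hy2⟩
            refine ⟨⟨y, by omega⟩, ?_, rfl⟩
            set q : Fin (K+3) := ⟨y, by omega⟩ with hq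
            have hqval : (q : ℕ) = y := rfl
            have hqK : (q : ℕ) < K := by omega
            have hqnl : ¬ (w + 2 < (α q : ℕ)) := by
              intro hc
              exact hy2 ((hmemT y).mpr ⟨q, hqval, hc⟩)
            have hqs : (α q : ℕ) < w := by
              rcases hvaltail q hqK with h | h
              · exact h
              · exact absurd h hqnl
            have := M1 q x (Fin.lt_def.mpr (by omega)) hxK hqs hsm
            exact Fin.lt_def.mpr this
          · rintro ⟨q, hq, rfl⟩
            have hq' := Fin.lt_def.mp hq
            have hqK : (q : ℕ) < K := by
              by_contra hge
              rcases htail q hge with h | h | h <;> rw [h] at hq' <;> omega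
            constructor
            · rcases lt_trichotomy q x with h | h | h
              · exact Fin.lt_def.mp h
              · rw [h] at hq'; omega
              · have := M1 x q h hqK hsm (by omega)
                omega
            · rw [hmemT]
              rintro ⟨q', hq'', hq2⟩
              have : q' = q := Fin.ext hq''
              rw [this] at hq2; omega
        rw [hset, Finset.card_image_of_injective _ Fin.val_injective, perm_filter_lt]
      · -- large case
        have hxT : (x : ℕ) ∈ T := (hmemT _).mpr ⟨x, rfl, hlg⟩
        rw [fval_mem hxT]
        have hset : T ∩ Finset.range (x : ℕ) =
            (univ.filter fun q => α x < α q).image Fin.val := by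
          ext y
          simp only [Finset.mem_inter, Finset.mem_range, Finset.mem_image, Finset.mem_filter,
            Finset.mem_univ, true_and]
          constructor
          · rintro ⟨hy1, hy2⟩
            rw [hmemT] at hy1
            obtain ⟨q, rfl, hq⟩ := hy1
            refine ⟨q, ?_, rfl⟩
            have := M2 q x (Fin.lt_def.mpr hy2) hxK hq hlg
            exact Fin.lt_def.mpr this
          · rintro ⟨q, hq, rfl⟩
            have hq' := Fin.lt_def.mp hq
            have hqlg : w + 2 < (α q : ℕ) := by omega
            have hqK : (q : ℕ) < K := by
              by_contra hge
              rcases htail q hge with h | h | h <;> rw [h] at hqlg <;> omega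
            refine ⟨(hmemT _).mpr ⟨q, rfl, hqlg⟩, ?_⟩
            rcases lt_trichotomy q x with h | h | h
            · exact Fin.lt_def.mp h
            · rw [h] at hq'; omega
            · have := M2 x q h hqK hlg hqlg
              omega
        rw [hset, Finset.card_image_of_injective _ Fin.val_injective, perm_filter_gt]
        have hx2 := x.isLt
        have := (α x).isLt
        omega
    · rcases htail x hxK with h | h | h <;> rw [h]
      · rw [hi0, fval_K hT, hcardT]; omega
      · rw [hj1, fval_K1 hT, hcardT]; omega
      · rw [hk2, fval_K2 hT, hcardT]; omega
  exact Equiv.ext fun x => Fin.ext (by rw [Phi_apply hT]; exact main x)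

end Stmt12

theorem stmt12 (n : ℕ) (hn : 3 ≤ n) :
    Set.ncard {α : Equiv.Perm (Fin n) |
        (¬ ∃ i j l : Fin n, i < j ∧ j < l ∧ α j < α i ∧ α i < α l) ∧
        (∃! t : Fin n × Fin n × Fin n,
          t.1 < t.2.1 ∧ t.2.1 < t.2.2 ∧ α t.2.2 < α t.1 ∧ α t.1 < α t.2.1)}
      = 2 ^ (n - 3) := by
  obtain ⟨K, rfl⟩ : ∃ K, n = K + 3 := ⟨n - 3, by omega⟩
  have hset : {α : Equiv.Perm (Fin (K+3)) |
        (¬ ∃ i j l : Fin (K+3), i < j ∧ j < l ∧ α j < α i ∧ α i < α l) ∧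
        (∃! t : Fin (K+3) × Fin (K+3) × Fin (K+3),
          t.1 < t.2.1 ∧ t.2.1 < t.2.2 ∧ α t.2.2 < α t.1 ∧ α t.1 < α t.2.1)} =
      Stmt12.Phi K '' ↑((Finset.range K).powerset) := by
    ext α
    simp only [Set.mem_setOf_eq, Set.mem_image, Finset.mem_coe, Finset.mem_powerset]
    constructor
    · rintro ⟨hA, hU⟩
      obtain ⟨T, hT, hPhi⟩ := Stmt12.converse hA hU
      exact ⟨T, hT, hPhi⟩
    · rintro ⟨T, hT, rfl⟩
      exact Stmt12.Phi_mem hT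
  rw [hset, Set.ncard_image_of_injOn
    (fun T hT T' hT' h => Stmt12.Phi_injOn
      (Finset.mem_powerset.mp (Finset.mem_coe.mp hT))
      (Finset.mem_powerset.mp (Finset.mem_coe.mp hT')) h),
    Set.ncard_coe_finset, Finset.card_powerset, Finset.card_range]
  norm_num
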